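/- arXiv:2008.05025 — 5 statements merged into one kernel-verified Lean document; each statement's English description precedes it below -/
import Mathlib

section
/- Let G = (V,E) be a connected, locally finite simple graph in which every vertex x satisfies #N(x) ≥ 4, and let f : V → ℝ be coercive, i.e. for every a ∈ ℝ the sublevel set {x ∈ V : f(x) ≤ a} is finite. Suppose z₀ ≠ z₁ are two strict local minimum points of f, i.e. f(y) > f(zᵢ) for every y ∼ zᵢ (i = 0,1). Let c = inf over all paths P from z₀ to z₁ of max_{z ∈ P} f(z). Then c > max(f(z₀), f(z₁)), the infimum is attained by some path P from z₀ to z₁ (so max_{z ∈ P} f(z) = c), and there exists a vertex z on P with f(z) = c such that f(y) ≥ c for every neighbor y of z not lying on P; such a z is a mini-max point of f. -/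
open SimpleGraph

/-- The maximum of a function `f : V → ℝ` over the vertices of a walk `p`. -/
noncomputable def walkMax {V : Type*} [DecidableEq V] (G : SimpleGraph V) (f : V → ℝ)
    {u v : V} (p : G.Walk u v) : ℝ :=
  p.support.toFinset.sup' ⟨u, by simp⟩ f

section Aux
variable {V : Type*} [DecidableEq V] {G : SimpleGraph V}

lemma le_walkMax (f : V → ℝ) {u v x : V} (p : G.Walk u v) (hx : x ∈ p.support) :
    f x ≤ walkMax G f p :=
  Finset.le_sup' f (by simpa using hx)

lemma exists_eq_walkMax (f : V → ℝ) {u v : V} (p : G.Walk u v) :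
    ∃ z ∈ p.support, f z = walkMax G f p := by
  obtain ⟨b, hb, hb'⟩ := Finset.exists_mem_eq_sup' (⟨u, by simp⟩ : p.support.toFinset.Nonempty) f
  exact ⟨b, by simpa using hb, hb'.symm⟩

lemma walkMax_le (f : V → ℝ) {u v : V} {c : ℝ} (p : G.Walk u v)
    (h : ∀ x ∈ p.support, f x ≤ c) : walkMax G f p ≤ c :=
  Finset.sup'_le _ _ fun x hx => h x (by simpa using hx)

lemma start_lt_walkMax (f : V → ℝ) {u v : V} (hne : u ≠ v)
    (h : ∀ y, G.Adj u y → f u < f y) (p : G.Walk u v) : f u < walkMax G f p := by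
  cases p with
  | nil => exact absurd rfl hne
  | cons hadj q =>
      exact lt_of_lt_of_le (h _ hadj)
        (le_walkMax f _ (List.mem_cons_of_mem _ q.start_mem_support))

/-- A closed walk at `z` visiting every vertex of `L` (all adjacent to `z`). -/
def detourLoop (G : SimpleGraph V) (z : V) : (L : List V) → (∀ y ∈ L, G.Adj z y) → G.Walk z z
  | [], _ => Walk.nil
  | y :: rest, h =>
      Walk.cons (h y List.mem_cons_self)
        (Walk.cons (h y List.mem_cons_self).symm
          (detourLoop G z rest fun x hx => h x (List.mem_cons_of_mem y hx)))

lemma mem_detourLoop_support (z : V) (L : List V) (h : ∀ y ∈ L, G.Adj z y) (x : V) :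
    x ∈ (detourLoop G z L h).support ↔ x = z ∨ x ∈ L := by
  induction L with
  | nil => simp [detourLoop]
  | cons y rest ih =>
      simp only [detourLoop, Walk.support_cons, List.mem_cons, ih]
      tauto

end Aux

/-- **Mini-max theorem on graphs.** Let `G` be a connected, locally finite simple graph
with `#N(x) ≥ 4` at every vertex, and let `f : V → ℝ` be coercive (all sublevel sets are
finite). If `z₀ ≠ z₁` are two strict local minimum points of `f`, then the mini-max
value `c = inf_{paths P from z₀ to z₁} max_{z ∈ P} f z` satisfies
`c > max (f z₀) (f z₁)`, the infimum is attained by some path `P`, and some vertex `z`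
on `P` with `f z = c` satisfies `f y ≥ c` for every neighbor `y` of `z` not on `P`
(a mini-max point of `f`). -/
theorem minimax_point_exists {V : Type*} [DecidableEq V] (G : SimpleGraph V)
    [DecidableRel G.Adj] [∀ v : V, Fintype (G.neighborSet v)]
    (hconn : G.Connected) (hdeg : ∀ x : V, 4 ≤ G.degree x)
    (f : V → ℝ) (hcoer : ∀ a : ℝ, {x : V | f x ≤ a}.Finite)
    (z₀ z₁ : V) (hne : z₀ ≠ z₁)
    (h₀ : ∀ y : V, G.Adj z₀ y → f z₀ < f y)
    (h₁ : ∀ y : V, G.Adj z₁ y → f z₁ < f y) :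
    max (f z₀) (f z₁) < sInf {m : ℝ | ∃ p : G.Walk z₀ z₁, walkMax G f p = m} ∧
    ∃ p : G.Walk z₀ z₁,
      walkMax G f p = sInf {m : ℝ | ∃ q : G.Walk z₀ z₁, walkMax G f q = m} ∧
      ∃ z ∈ p.support, f z = walkMax G f p ∧
        ∀ y : V, G.Adj z y → y ∉ p.support → walkMax G f p ≤ f y := by
  classical
  set S : Set ℝ := {m : ℝ | ∃ p : G.Walk z₀ z₁, walkMax G f p = m} with hSdef
  obtain ⟨p₀⟩ := hconn.preconnected z₀ z₁
  set a : ℝ := walkMax G f p₀ with ha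
  -- the truncated value set is finite
  have hTsub : S ∩ Set.Iic a ⊆ f '' {x : V | f x ≤ a} := by
    rintro m ⟨⟨p, hp⟩, hma⟩
    obtain ⟨z, hz, hz'⟩ := exists_eq_walkMax f p
    exact ⟨z, by simp only [Set.mem_setOf_eq]; rw [hz', hp]; exact hma, by rw [hz', hp]⟩
  have hTfin : (S ∩ Set.Iic a).Finite := ((hcoer a).image f).subset hTsub
  have hTne : (S ∩ Set.Iic a).Nonempty := ⟨a, ⟨p₀, rfl⟩, Set.mem_Iic.2 le_rfl⟩
  obtain ⟨m, hmT, hmin⟩ := Set.exists_min_image _ id hTfin hTne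
  have hleast : IsLeast S m := by
    refine ⟨hmT.1, fun x hx => ?_⟩
    by_cases hxa : x ≤ a
    · exact hmin x ⟨hx, hxa⟩
    · exact le_trans (hmin a ⟨⟨p₀, rfl⟩, Set.mem_Iic.2 le_rfl⟩) (le_of_not_ge hxa)
  have hc : sInf S = m := hleast.csInf_eq
  obtain ⟨p, hp⟩ := hmT.1
  -- strict inequalities
  have hlt0 : f z₀ < m := hp ▸ start_lt_walkMax f hne h₀ p
  have hlt1 : f z₁ < m := by
    have hrev : walkMax G f p.reverse = walkMax G f p := by
      simp [walkMax, Walk.support_reverse]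
    calc f z₁ < walkMax G f p.reverse := start_lt_walkMax f hne.symm h₁ p.reverse
    _ = m := by rw [hrev, hp]
  rw [hc]
  refine ⟨max_lt hlt0 hlt1, ?_⟩
  -- construct the detoured walk
  obtain ⟨z, hz, hzval⟩ := exists_eq_walkMax f p
  set L : List V := ((G.neighborFinset z).filter (fun y => f y < m)).toList with hL
  have hLadj : ∀ y ∈ L, G.Adj z y := by
    intro y hy
    rw [hL, Finset.mem_toList, Finset.mem_filter, mem_neighborFinset] at hy
    exact hy.1
  have hLlt : ∀ y ∈ L, f y < m := by
    intro y hy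
    rw [hL, Finset.mem_toList, Finset.mem_filter] at hy
    exact hy.2
  set q : G.Walk z₀ z₁ :=
    (p.takeUntil z hz).append ((detourLoop G z L hLadj).append (p.dropUntil z hz)) with hq
  have hpsup : ∀ x, x ∈ p.support ↔
      x ∈ (p.takeUntil z hz).support ∨ x ∈ (p.dropUntil z hz).support := by
    intro x
    conv_lhs => rw [← Walk.take_spec p hz]
    exact Walk.mem_support_append_iff _ _
  have hqsup : ∀ x, x ∈ q.support ↔ x ∈ p.support ∨ x ∈ L := by
    intro x
    rw [hq, Walk.mem_support_append_iff, Walk.mem_support_append_iff,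
      mem_detourLoop_support, hpsup x]
    constructor
    · rintro (h | (h | h) | h)
      · exact Or.inl (Or.inl h)
      · exact Or.inl (Or.inl (h ▸ (p.takeUntil z hz).end_mem_support))
      · exact Or.inr h
      · exact Or.inl (Or.inr h)
    · rintro ((h | h) | h)
      · exact Or.inl h
      · exact Or.inr (Or.inr h)
      · exact Or.inr (Or.inl (Or.inr h))
  have hzq : z ∈ q.support := (hqsup z).2 (Or.inl hz)
  have hqmax : walkMax G f q = m := by
    apply le_antisymm
    · apply walkMax_le
      intro x hx
      rcases (hqsup x).1 hx with h | h
      · exact hp ▸ le_walkMax f p h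
      · exact le_of_lt (hLlt x h)
    · calc m = f z := by rw [hzval, hp]
      _ ≤ walkMax G f q := le_walkMax f q hzq
  refine ⟨q, hqmax, z, hzq, ?_, ?_⟩
  · rw [hqmax, hzval, hp]
  · intro y hyz hyq
    by_contra hlt
    push_neg at hlt
    apply hyq
    apply (hqsup y).2
    refine Or.inr ?_
    rw [hL, Finset.mem_toList, Finset.mem_filter, mem_neighborFinset]
    exact ⟨hyz, hqmax ▸ hlt⟩
end

section
/- (Barta-type theorem) Let G = (V,E) be a connected, locally finite simple graph in which every vertex has degree at least 1, let Q : V → ℝ, and let L be the Schrödinger operator Lf(x) = −Δf(x) + Q(x) f(x). Suppose there exist μ ∈ ℝ and a function u : V → ℝ with u(x) > 0 for all x such that Lu(x) ≥ μ u(x) for every x ∈ V. Then for every finite subset S ⊆ V and every function f : V → ℝ vanishing outside S with f not identically zero, Σ_{x ∈ S} (Lf)(x) f(x) d_x ≥ μ Σ_{x ∈ S} f(x)² d_x; equivalently, the principal Dirichlet eigenvalue μ₁(S) = inf{ Σ_{x∈S} (Lf)(x) f(x) d_x : f vanishes outside S, Σ_{x∈S} f(x)² d_x = 1 } satisfies μ₁(S)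 ≥ μ for every finite S, so μ₁(Q) = inf_S μ₁(S) ≥ μ. -/
/-- The graph Laplacian `Δf(x) = (1/d_x) Σ_{y ∼ x} (f y − f x)`. -/
noncomputable def graphLap {V : Type*} (G : SimpleGraph V) [DecidableRel G.Adj]
    [∀ v : V, Fintype (G.neighborSet v)] (f : V → ℝ) (x : V) : ℝ :=
  (1 / (G.degree x : ℝ)) * ∑ y ∈ G.neighborFinset x, (f y - f x)

/-- The Schrödinger operator `L = −Δ + Q`, acting by `Lf(x) = −Δf(x) + Q(x) f(x)`. -/
noncomputable def schrodingerOp {V : Type*} (G : SimpleGraph V) [DecidableRel G.Adj]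
    [∀ v : V, Fintype (G.neighborSet v)] (Q : V → ℝ) (f : V → ℝ) (x : V) : ℝ :=
  -graphLap G f x + Q x * f x

/-- **Barta-type theorem.** Let `G` be a connected, locally finite simple graph with all
degrees at least `1`, `Q : V → ℝ`, and `L = −Δ + Q`. If there are `μ ∈ ℝ` and a
positive function `u` with `Lu ≥ μ u` on `V`, then for every finite `S ⊆ V` and every
`f : V → ℝ` vanishing outside `S` and not identically zero,
`Σ_{x∈S} (Lf)(x) f(x) d_x ≥ μ Σ_{x∈S} f(x)² d_x`; in particular every principal
Dirichlet eigenvalue `μ₁(S)`, and hence `μ₁(Q) = inf_S μ₁(S)`, is at least `μ`. -/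
theorem barta_type_theorem {V : Type*} (G : SimpleGraph V)
    [DecidableRel G.Adj] [∀ v : V, Fintype (G.neighborSet v)]
    (hconn : G.Connected) (hdeg : ∀ x : V, 1 ≤ G.degree x)
    (Q : V → ℝ) (μ : ℝ) (u : V → ℝ) (hu : ∀ x : V, 0 < u x)
    (hL : ∀ x : V, μ * u x ≤ schrodingerOp G Q u x) :
    ∀ (S : Finset V) (f : V → ℝ), (∀ x ∉ S, f x = 0) → f ≠ 0 →
      μ * ∑ x ∈ S, f x ^ 2 * (G.degree x : ℝ) ≤
        ∑ x ∈ S, schrodingerOp G Q f x * f x * (G.degree x : ℝ) := by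
  classical
  intro S f hf _hf0
  set F : V → V → ℝ := fun x y => f x ^ 2 * u y / u x - f x * f y with hF
  have hd : ∀ x : V, (G.degree x : ℝ) ≠ 0 := fun x =>
    Nat.cast_ne_zero.mpr (by have := hdeg x; omega)
  have hux : ∀ x, u x ≠ 0 := fun x => (hu x).ne'
  -- pointwise identity
  have key : ∀ x : V,
      schrodingerOp G Q f x * f x * (G.degree x : ℝ)
        = schrodingerOp G Q u x * (f x ^ 2 / u x) * (G.degree x : ℝ)
          + ∑ y ∈ G.neighborFinset x, F x y := by
    intro x
    have hcard : (∑ y ∈ G.neighborFinset x, (1 : ℝ)) = (G.degree x : ℝ) := by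
      simp [SimpleGraph.card_neighborFinset_eq_degree]
    have hsum : ∑ y ∈ G.neighborFinset x, F x y
        = (f x ^ 2 / u x) * (∑ y ∈ G.neighborFinset x, (u y - u x))
          - f x * (∑ y ∈ G.neighborFinset x, (f y - f x)) := by
      rw [Finset.mul_sum, Finset.mul_sum, ← Finset.sum_sub_distrib]
      refine Finset.sum_congr rfl fun y _ => ?_
      simp only [hF]
      field_simp [hux x]
      ring
    simp only [schrodingerOp, graphLap, hsum]
    field_simp [hd x, hux x]
    ring
  -- pointwise lower bound
  have step1 : ∀ x : V, μ * f x ^ 2 * (G.degree x : ℝ)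
      ≤ schrodingerOp G Q u x * (f x ^ 2 / u x) * (G.degree x : ℝ) := by
    intro x
    have h0 : (0 : ℝ) ≤ (f x ^ 2 / u x) * (G.degree x : ℝ) :=
      mul_nonneg (div_nonneg (sq_nonneg _) (hu x).le) (Nat.cast_nonneg _)
    have := mul_le_mul_of_nonneg_right (hL x) h0
    calc μ * f x ^ 2 * (G.degree x : ℝ)
        = μ * u x * ((f x ^ 2 / u x) * (G.degree x : ℝ)) := by
          field_simp [hux x]
      _ ≤ schrodingerOp G Q u x * ((f x ^ 2 / u x) * (G.degree x : ℝ)) := this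
      _ = schrodingerOp G Q u x * (f x ^ 2 / u x) * (G.degree x : ℝ) := by ring
  -- F vanishes when f x = 0
  have hFzero : ∀ x, f x = 0 → ∀ y, F x y = 0 := by
    intro x hx y; simp [hF, hx]
  -- the edge sum is nonnegative
  set T : Finset V := S ∪ S.biUnion (fun x => G.neighborFinset x) with hT
  have hST : S ⊆ T := Finset.subset_union_left
  have hTf : ∀ x ∈ T, x ∉ S → f x = 0 := fun x _ hx => hf x hx
  have h2 : ∑ x ∈ S, ∑ y ∈ G.neighborFinset x, F x y
      = ∑ x ∈ T, ∑ y ∈ G.neighborFinset x, F x y := by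
    refine Finset.sum_subset hST fun x hxT hxS => ?_
    have hfx := hf x hxS
    simp [hFzero x hfx]
  have h3 : ∀ x ∈ T, ∑ y ∈ G.neighborFinset x, F x y
      = ∑ y ∈ T.filter (fun y => G.Adj x y), F x y := by
    intro x hxT
    refine (Finset.sum_subset ?_ ?_).symm
    · intro y hy
      simp only [Finset.mem_filter] at hy
      exact (SimpleGraph.mem_neighborFinset G x y).mpr hy.2
    · intro y hyN hyF
      by_cases hxS : x ∈ S
      · exfalso
        apply hyF
        simp only [Finset.mem_filter]
        refine ⟨?_, (SimpleGraph.mem_neighborFinset G x y).mp hyN⟩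
        exact Finset.mem_union_right _ (Finset.mem_biUnion.mpr ⟨x, hxS, hyN⟩)
      · exact hFzero x (hf x hxS) y
  set P : Finset (V × V) := (T ×ˢ T).filter (fun p => G.Adj p.1 p.2) with hP
  have h4 : ∑ x ∈ T, ∑ y ∈ T.filter (fun y => G.Adj x y), F x y
      = ∑ p ∈ P, F p.1 p.2 := by
    rw [hP, Finset.sum_filter, Finset.sum_product]
    exact Finset.sum_congr rfl fun x _ => Finset.sum_filter _ _
  have hswap : ∑ p ∈ P, F p.2 p.1 = ∑ p ∈ P, F p.1 p.2 := by
    refine Finset.sum_nbij' (fun p => Prod.swap p) (fun p => Prod.swap p) ?_ ?_ ?_ ?_ ?_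
    · intro p hp
      simp only [hP, Finset.mem_filter, Finset.mem_product] at hp ⊢
      exact ⟨⟨hp.1.2, hp.1.1⟩, hp.2.symm⟩
    · intro p hp
      simp only [hP, Finset.mem_filter, Finset.mem_product] at hp ⊢
      exact ⟨⟨hp.1.2, hp.1.1⟩, hp.2.symm⟩
    · intro p _; simp
    · intro p _; simp
    · intro p _; simp
  have amgm : ∀ (a b p q : ℝ), 0 < p → 0 < q →
      0 ≤ (a ^ 2 * q / p - a * b) + (b ^ 2 * p / q - b * a) := by
    intro a b p q hp hq
    have heq : (a ^ 2 * q / p - a * b) + (b ^ 2 * p / q - b * a)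
        = (a * q - b * p) ^ 2 / (p * q) := by
      field_simp
      ring
    rw [heq]; positivity
  have hnonneg : 0 ≤ ∑ p ∈ P, F p.1 p.2 := by
    have h2sum : 2 * ∑ p ∈ P, F p.1 p.2 = ∑ p ∈ P, (F p.1 p.2 + F p.2 p.1) := by
      rw [Finset.sum_add_distrib, hswap]; ring
    have : 0 ≤ ∑ p ∈ P, (F p.1 p.2 + F p.2 p.1) := by
      refine Finset.sum_nonneg fun p _ => ?_
      simpa [hF] using amgm (f p.1) (f p.2) (u p.1) (u p.2) (hu p.1) (hu p.2)
    linarith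
  -- assemble
  calc μ * ∑ x ∈ S, f x ^ 2 * (G.degree x : ℝ)
      = ∑ x ∈ S, μ * f x ^ 2 * (G.degree x : ℝ) := by
        rw [Finset.mul_sum]; exact Finset.sum_congr rfl fun x _ => by ring
    _ ≤ ∑ x ∈ S, schrodingerOp G Q u x * (f x ^ 2 / u x) * (G.degree x : ℝ) :=
        Finset.sum_le_sum fun x _ => step1 x
    _ ≤ (∑ x ∈ S, schrodingerOp G Q u x * (f x ^ 2 / u x) * (G.degree x : ℝ))
          + ∑ x ∈ S, ∑ y ∈ G.neighborFinset x, F x y := by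
        have : ∑ x ∈ S, ∑ y ∈ G.neighborFinset x, F x y = ∑ p ∈ P, F p.1 p.2 := by
          rw [h2, ← h4]
          exact Finset.sum_congr rfl h3
        linarith [this ▸ hnonneg]
    _ = ∑ x ∈ S, schrodingerOp G Q f x * f x * (G.degree x : ℝ) := by
        rw [← Finset.sum_add_distrib]
        exact Finset.sum_congr rfl fun x _ => (key x).symm
end

section
/- (Energy identity for the heat flow) Let G = (V,E) be a locally finite simple graph, S ⊆ V finite with every vertex of S̄ = S ∪ δS of degree at least 1, Q : S̄ → ℝ, f : S̄ → ℝ vanishing on δS, and let u : [0,∞) × S̄ → ℝ be the solution of ∂_t u = Δu − Q u on S with u(t,·) = 0 on δS and u(0,·) = f. Define the energy F(v) = Σ_{x ∈ S} ( −Δv(x) + Q(x) v(x) ) v(x) d_x for v : S̄ → ℝ vanishing on δS. Then for every t ≥ 0, F(u(t,·)) + 2 ∫₀ᵗ Σ_{x ∈ S} (∂_t u(s,x))² d_x ds = F(f); in particular t ↦ F(u(t,·)) is nonincreasing. -/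
/-- The boundary `δS` of a finite vertex set `S`. -/
def graphBd {V : Type*} [DecidableEq V] (G : SimpleGraph V) [DecidableRel G.Adj]
    [∀ v : V, Fintype (G.neighborSet v)] (S : Finset V) : Finset V :=
  (S.biUnion fun x => G.neighborFinset x) \ S

/-- The closure `S̄ = S ∪ δS` of a finite vertex set `S`. -/
def graphCl {V : Type*} [DecidableEq V] (G : SimpleGraph V) [DecidableRel G.Adj]
    [∀ v : V, Fintype (G.neighborSet v)] (S : Finset V) : Finset V :=
  S ∪ graphBd G S

/-- The energy `F(v) = Σ_{x∈S} (−Δv(x) + Q(x) v(x)) v(x) d_x`. -/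
noncomputable def graphEnergy {V : Type*} (G : SimpleGraph V) [DecidableRel G.Adj]
    [∀ v : V, Fintype (G.neighborSet v)] (S : Finset V) (Q : V → ℝ) (v : V → ℝ) : ℝ :=
  ∑ x ∈ S, (-graphLap G v x + Q x * v x) * v x * (G.degree x : ℝ)

section Aux

variable {V : Type*} [DecidableEq V] (G : SimpleGraph V) [DecidableRel G.Adj]
    [∀ v : V, Fintype (G.neighborSet v)]

lemma mem_graphCl_of_adj' {S : Finset V} {x y : V} (hx : x ∈ S) (hxy : G.Adj x y) :
    y ∈ graphCl G S := by
  by_cases hy : y ∈ S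
  · exact Finset.mem_union_left _ hy
  · refine Finset.mem_union_right _ ?_
    simp only [graphBd, Finset.mem_sdiff, Finset.mem_biUnion, SimpleGraph.mem_neighborFinset]
    exact ⟨⟨x, hx, hxy⟩, hy⟩

lemma mem_graphBd_of_adj' {S : Finset V} {x y : V} (hx : x ∈ S) (hxy : G.Adj x y)
    (hy : y ∉ S) : y ∈ graphBd G S := by
  simp only [graphBd, Finset.mem_sdiff, Finset.mem_biUnion, SimpleGraph.mem_neighborFinset]
  exact ⟨⟨x, hx, hxy⟩, hy⟩

lemma sum_adj_swap' (S : Finset V) (f : V → V → ℝ) :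
    ∑ x ∈ S, ∑ y ∈ G.neighborFinset x ∩ S, f x y
      = ∑ x ∈ S, ∑ y ∈ G.neighborFinset x ∩ S, f y x := by
  have key : ∀ g : V → V → ℝ, ∑ x ∈ S, ∑ y ∈ G.neighborFinset x ∩ S, g x y
      = ∑ x ∈ S, ∑ y ∈ S, if G.Adj x y then g x y else 0 := by
    intro g
    refine Finset.sum_congr rfl fun x _ => ?_
    rw [← Finset.sum_filter]
    refine Finset.sum_congr ?_ fun y _ => rfl
    ext y
    simp [Finset.mem_inter, SimpleGraph.mem_neighborFinset, and_comm]
  rw [key, key, Finset.sum_comm]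
  refine Finset.sum_congr rfl fun x _ => Finset.sum_congr rfl fun y _ => ?_
  congr 1
  exact propext (G.adj_comm y x)

lemma sum_adj_sym' (S : Finset V) (a b : V → ℝ) :
    ∑ x ∈ S, ∑ y ∈ G.neighborFinset x ∩ S, (a x - a y) * b x
      = ∑ x ∈ S, ∑ y ∈ G.neighborFinset x ∩ S, (b x - b y) * a x := by
  have h1 := sum_adj_swap' G S (fun x y => (a x - a y) * b x)
  have h2 := sum_adj_swap' G S (fun x y => (b x - b y) * a x)
  have e : (∑ x ∈ S, ∑ y ∈ G.neighborFinset x ∩ S, ((a x - a y) * b x + (a y - a x) * b y))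
      = ∑ x ∈ S, ∑ y ∈ G.neighborFinset x ∩ S, ((b x - b y) * a x + (b y - b x) * a y) :=
    Finset.sum_congr rfl fun x _ => Finset.sum_congr rfl fun y _ => by ring
  simp only [Finset.sum_add_distrib] at e
  linarith

lemma graphEnergy_expand' (S : Finset V) (hdeg : ∀ x ∈ graphCl G S, 1 ≤ G.degree x)
    (Q v w : V → ℝ) (hv : ∀ y ∈ graphBd G S, v y = 0) :
    ∑ x ∈ S, (-graphLap G v x + Q x * v x) * w x * (G.degree x : ℝ)
      = ∑ x ∈ S, ((∑ y ∈ G.neighborFinset x ∩ S, (v x - v y) * w x)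
          + ((G.neighborFinset x \ S).card : ℝ) * (v x * w x)
          + Q x * (v x * w x) * (G.degree x : ℝ)) := by
  refine Finset.sum_congr rfl fun x hx => ?_
  have hd : (G.degree x : ℝ) ≠ 0 := by
    have h := hdeg x (Finset.mem_union_left _ hx)
    have h0 : (0:ℕ) < G.degree x := by omega
    exact_mod_cast h0.ne'
  have hsplit : ∑ y ∈ G.neighborFinset x, (v x - v y) * w x
      = (∑ y ∈ G.neighborFinset x ∩ S, (v x - v y) * w x)
        + ((G.neighborFinset x \ S).card : ℝ) * (v x * w x) := by
    rw [← Finset.sum_inter_add_sum_sdiff (G.neighborFinset x) S (fun y => (v x - v y) * w x)]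
    congr 1
    rw [Finset.sum_congr rfl (g := fun _ => v x * w x) (fun y hy => ?_), Finset.sum_const,
      nsmul_eq_mul]
    have hy1 := Finset.mem_sdiff.1 hy
    have hy' : y ∈ graphBd G S :=
      mem_graphBd_of_adj' G hx ((SimpleGraph.mem_neighborFinset _ _ _).1 hy1.1) hy1.2
    rw [hv y hy']; ring
  have hmain : (-graphLap G v x + Q x * v x) * w x * (G.degree x : ℝ)
      = (∑ y ∈ G.neighborFinset x, (v x - v y) * w x) + Q x * (v x * w x) * (G.degree x : ℝ) := by
    unfold graphLap
    rw [← Finset.sum_mul]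
    have : ∑ y ∈ G.neighborFinset x, (v x - v y) = -∑ y ∈ G.neighborFinset x, (v y - v x) := by
      rw [← Finset.sum_neg_distrib]
      exact Finset.sum_congr rfl fun y _ => by ring
    rw [this]
    field_simp
  rw [hmain, hsplit]

end Aux

/-- **Energy identity for the heat flow.** If `u` solves `∂_t u = Δu − Q u` on a finite
subgraph `S` with Dirichlet boundary condition `u = 0` on `δS` and initial value
`u(0,·) = f` (with `f = 0` on `δS`), then for every `t ≥ 0`:
`F(u(t,·)) + 2 ∫₀ᵗ Σ_{x∈S} (∂_t u(s,x))² d_x ds = F(f)`, where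
`F(v) = Σ_{x∈S} (−Δv + Q v) v d_x`; in particular `t ↦ F(u(t,·))` is nonincreasing. -/
theorem heat_flow_energy_identity {V : Type*} [DecidableEq V] (G : SimpleGraph V)
    [DecidableRel G.Adj] [∀ v : V, Fintype (G.neighborSet v)]
    (S : Finset V) (hdeg : ∀ x ∈ graphCl G S, 1 ≤ G.degree x)
    (Q f : V → ℝ) (hf : ∀ y ∈ graphBd G S, f y = 0)
    (u u' : ℝ → V → ℝ)
    (hbd : ∀ t ∈ Set.Ici (0 : ℝ), ∀ y ∈ graphBd G S, u t y = 0)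
    (hinit : ∀ x ∈ graphCl G S, u 0 x = f x)
    (hderiv : ∀ x ∈ S, ∀ t ∈ Set.Ici (0 : ℝ),
      HasDerivWithinAt (fun s => u s x) (u' t x) (Set.Ici 0) t)
    (hflow : ∀ x ∈ S, ∀ t ∈ Set.Ici (0 : ℝ),
      u' t x = graphLap G (u t) x - Q x * u t x) :
    (∀ t ∈ Set.Ici (0 : ℝ),
      graphEnergy G S Q (u t) +
        2 * ∫ s in (0 : ℝ)..t, ∑ x ∈ S, u' s x ^ 2 * (G.degree x : ℝ) =
      graphEnergy G S Q f) ∧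
    (∀ s ∈ Set.Ici (0 : ℝ), ∀ t : ℝ, s ≤ t →
      graphEnergy G S Q (u t) ≤ graphEnergy G S Q (u s)) := by
  classical
  set φ : ℝ → ℝ := fun s => ∑ x ∈ S, u' s x ^ 2 * (G.degree x : ℝ) with hφdef
  set E : ℝ → ℝ := fun t => graphEnergy G S Q (u t) with hEdef
  -- continuity of u on the closure
  have hcontu : ∀ y ∈ graphCl G S, ContinuousOn (fun s => u s y) (Set.Ici 0) := by
    intro y hy
    rcases Finset.mem_union.1 hy with hy' | hy'
    · exact fun t ht => (hderiv y hy' t ht).continuousWithinAt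
    · exact (continuousOn_const (c := (0:ℝ))).congr (fun t ht => hbd t ht y hy')
  -- continuity of φ
  have hφcont : ContinuousOn φ (Set.Ici 0) := by
    have h : ContinuousOn
        (fun s => ∑ x ∈ S, (graphLap G (u s) x - Q x * u s x) ^ 2 * (G.degree x : ℝ))
        (Set.Ici 0) := by
      apply continuousOn_finset_sum
      intro x hx
      refine (ContinuousOn.pow (ContinuousOn.sub ?_ ?_) 2).mul continuousOn_const
      · unfold graphLap
        refine continuousOn_const.mul (continuousOn_finset_sum _ fun y hy => ?_)
        exact (hcontu y (mem_graphCl_of_adj' G hx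
          ((SimpleGraph.mem_neighborFinset _ _ _).1 hy))).sub
          (hcontu x (Finset.mem_union_left _ hx))
      · exact continuousOn_const.mul (hcontu x (Finset.mem_union_left _ hx))
    refine h.congr fun t ht => ?_
    exact Finset.sum_congr rfl fun x hx => by rw [hflow x hx t ht]
  have hφ0 : ∀ s : ℝ, 0 ≤ φ s := fun s => Finset.sum_nonneg fun x _ => by positivity
  -- the energy in "interior" coordinates
  have hEform : ∀ t ∈ Set.Ici (0:ℝ), E t
      = ∑ x ∈ S, ((∑ y ∈ G.neighborFinset x ∩ S, (u t x - u t y) * u t x)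
          + ((G.neighborFinset x \ S).card : ℝ) * (u t x * u t x)
          + Q x * (u t x * u t x) * (G.degree x : ℝ)) := fun t ht =>
    graphEnergy_expand' G S hdeg Q (u t) (u t) (hbd t ht)
  -- derivative of the energy
  have hEderiv : ∀ t ∈ Set.Ici (0:ℝ), HasDerivWithinAt E (-(2 * φ t)) (Set.Ici 0) t := by
    intro t ht
    have hD : HasDerivWithinAt
        (fun s => ∑ x ∈ S, ((∑ y ∈ G.neighborFinset x ∩ S, (u s x - u s y) * u s x)
          + ((G.neighborFinset x \ S).card : ℝ) * (u s x * u s x)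
          + Q x * (u s x * u s x) * (G.degree x : ℝ)))
        (∑ x ∈ S, ((∑ y ∈ G.neighborFinset x ∩ S,
              ((u' t x - u' t y) * u t x + (u t x - u t y) * u' t x))
          + ((G.neighborFinset x \ S).card : ℝ) * (u' t x * u t x + u t x * u' t x)
          + Q x * (u' t x * u t x + u t x * u' t x) * (G.degree x : ℝ)))
        (Set.Ici 0) t := by
      apply HasDerivWithinAt.fun_sum
      intro x hx
      have hux := hderiv x hx t ht
      refine HasDerivWithinAt.add (HasDerivWithinAt.add ?_ ?_) ?_
      · refine HasDerivWithinAt.fun_sum fun y hy => ?_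
        exact (hux.sub (hderiv y (Finset.mem_inter.1 hy).2 t ht)).mul hux
      · exact (hux.mul hux).const_mul _
      · exact ((hux.mul hux).const_mul _).mul_const _
    have hval : (∑ x ∈ S, ((∑ y ∈ G.neighborFinset x ∩ S,
              ((u' t x - u' t y) * u t x + (u t x - u t y) * u' t x))
          + ((G.neighborFinset x \ S).card : ℝ) * (u' t x * u t x + u t x * u' t x)
          + Q x * (u' t x * u t x + u t x * u' t x) * (G.degree x : ℝ)))
        = -(2 * φ t) := by
      have e1 : (∑ x ∈ S, ((∑ y ∈ G.neighborFinset x ∩ S,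
              ((u' t x - u' t y) * u t x + (u t x - u t y) * u' t x))
          + ((G.neighborFinset x \ S).card : ℝ) * (u' t x * u t x + u t x * u' t x)
          + Q x * (u' t x * u t x + u t x * u' t x) * (G.degree x : ℝ)))
          = (∑ x ∈ S, ∑ y ∈ G.neighborFinset x ∩ S, (u' t x - u' t y) * u t x)
            + ((∑ x ∈ S, ∑ y ∈ G.neighborFinset x ∩ S, (u t x - u t y) * u' t x)
              + 2 * ∑ x ∈ S, (((G.neighborFinset x \ S).card : ℝ) * (u t x * u' t x)
                + Q x * (u t x * u' t x) * (G.degree x : ℝ))) := by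
        rw [Finset.mul_sum, ← Finset.sum_add_distrib, ← Finset.sum_add_distrib]
        refine Finset.sum_congr rfl fun x _ => ?_
        rw [Finset.sum_add_distrib]
        ring
      have hswap := sum_adj_sym' G S (u' t) (u t)
      have e2 : (∑ x ∈ S, ∑ y ∈ G.neighborFinset x ∩ S, (u t x - u t y) * u' t x)
            + ∑ x ∈ S, (((G.neighborFinset x \ S).card : ℝ) * (u t x * u' t x)
                + Q x * (u t x * u' t x) * (G.degree x : ℝ))
          = -(φ t) := by
        have e3 := graphEnergy_expand' G S hdeg Q (u t) (u' t) (hbd t ht)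
        have e4 : ∑ x ∈ S, ((∑ y ∈ G.neighborFinset x ∩ S, (u t x - u t y) * u' t x)
            + ((G.neighborFinset x \ S).card : ℝ) * (u t x * u' t x)
            + Q x * (u t x * u' t x) * (G.degree x : ℝ))
            = (∑ x ∈ S, ∑ y ∈ G.neighborFinset x ∩ S, (u t x - u t y) * u' t x)
              + ∑ x ∈ S, (((G.neighborFinset x \ S).card : ℝ) * (u t x * u' t x)
                + Q x * (u t x * u' t x) * (G.degree x : ℝ)) := by
          rw [← Finset.sum_add_distrib]
          exact Finset.sum_congr rfl fun x _ => by ring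
        rw [← e4, ← e3, hφdef]
        rw [← Finset.sum_neg_distrib]
        refine Finset.sum_congr rfl fun x hx => ?_
        have := hflow x hx t ht
        have h5 : -graphLap G (u t) x + Q x * u t x = -(u' t x) := by rw [this]; ring
        rw [h5]
        ring
      rw [e1, hswap]
      linarith [e2]
    rw [← hval]
    exact hD.congr (fun s hs => hEform s hs) (hEform t ht)
  -- FTC
  have hkey : ∀ t ∈ Set.Ici (0:ℝ), E t + 2 * ∫ s in (0:ℝ)..t, φ s = E 0 := by
    intro t ht
    have ht0 : (0:ℝ) ≤ t := ht
    have hsub : Set.Icc (0:ℝ) t ⊆ Set.Ici 0 := Set.Icc_subset_Ici_self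
    have hcontE : ContinuousOn E (Set.Icc 0 t) := fun s hs =>
      ((hEderiv s (hsub hs)).continuousWithinAt).mono hsub
    have hint : IntervalIntegrable (fun s => -(2 * φ s)) MeasureTheory.volume 0 t := by
      apply ContinuousOn.intervalIntegrable
      have : Set.uIcc (0:ℝ) t ⊆ Set.Ici 0 := by
        rw [Set.uIcc_of_le ht0]; exact hsub
      exact ((continuousOn_const.mul hφcont).neg).mono this
    have hftc := intervalIntegral.integral_eq_sub_of_hasDeriv_right_of_le ht0 hcontE
      (fun s hs => (hEderiv s hs.1.le).mono
        (fun y hy => le_of_lt (lt_of_le_of_lt hs.1.le hy)))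
      hint
    have hi2 : ∫ s in (0:ℝ)..t, -(2 * φ s) = -(2 * ∫ s in (0:ℝ)..t, φ s) := by
      rw [intervalIntegral.integral_neg, intervalIntegral.integral_const_mul]
    rw [hi2] at hftc
    linarith
  have hE0 : E 0 = graphEnergy G S Q f := by
    rw [hEdef]
    simp only
    unfold graphEnergy
    refine Finset.sum_congr rfl fun x hx => ?_
    have hx' : x ∈ graphCl G S := Finset.mem_union_left _ hx
    have hlap : graphLap G (u 0) x = graphLap G f x := by
      unfold graphLap
      congr 1
      refine Finset.sum_congr rfl fun y hy => ?_
      rw [hinit y (mem_graphCl_of_adj' G hx ((SimpleGraph.mem_neighborFinset _ _ _).1 hy)),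
        hinit x hx']
    rw [hlap, hinit x hx']
  constructor
  · intro t ht
    have := hkey t ht
    rw [hE0] at this
    exact this
  · intro s hs t hst
    have ht : t ∈ Set.Ici (0:ℝ) := le_trans hs hst
    have h1 := hkey s hs
    have h2 := hkey t ht
    have hint1 : IntervalIntegrable φ MeasureTheory.volume 0 s := by
      apply ContinuousOn.intervalIntegrable
      refine hφcont.mono ?_
      rw [Set.uIcc_of_le hs]; exact Set.Icc_subset_Ici_self
    have hint2 : IntervalIntegrable φ MeasureTheory.volume s t := by
      apply ContinuousOn.intervalIntegrable
      refine hφcont.mono ?_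
      rw [Set.uIcc_of_le hst]
      exact fun y hy => le_trans hs hy.1
    have hadd := intervalIntegral.integral_add_adjacent_intervals hint1 hint2
    have hpos : 0 ≤ ∫ r in s..t, φ r :=
      intervalIntegral.integral_nonneg hst (fun r _ => hφ0 r)
    have hEst : E t ≤ E s := by
      have : (∫ r in (0:ℝ)..t, φ r) = (∫ r in (0:ℝ)..s, φ r) + ∫ r in s..t, φ r := hadd.symm
      nlinarith
    exact hEst
end

section
/- (Energy estimate for the discrete Morse flow) Let G = (V,E) be a locally finite simple graph, S ⊆ V finite with every vertex of S̄ = S ∪ δS of degree at least 1, h > 0, and let λ₁ ≤ λ₂ ≤ ⋯ ≤ λ_N be real numbers. For u : S̄ → ℝ vanishing on δS set D(u) = (1/2) Σ_{x ∈ S̄} Σ_{y ∈ S̄, y ∼ x} (u(y) − u(x))² and J_n(u) = (1/2) D(u) − (λ_n/2) Σ_{x ∈ S} u(x)² d_x. Let u₀ : S̄ → ℝ vanish on δS, and for n = 1, …, N let u_n minimize F_n(u) = (1/(2h)) Σ_{x ∈ S} (u(x) − u_{n−1}(x))² d_x + J_n(u) over functions on S̄ vanishing on δS. Then (1/2) Σ_{n=1}^{N}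 h Σ_{x ∈ S} ((u_n(x) − u_{n−1}(x))/h)² d_x + J_N(u_N) ≤ J₁(u₀). -/
/-- The Dirichlet energy `D(u) = (1/2) Σ_{x ∈ S̄} Σ_{y ∈ S̄, y ∼ x} (u y − u x)²`. -/
noncomputable def graphDirichlet {V : Type*} [DecidableEq V] (G : SimpleGraph V)
    [DecidableRel G.Adj] [∀ v : V, Fintype (G.neighborSet v)]
    (S : Finset V) (u : V → ℝ) : ℝ :=
  (1 / 2 : ℝ) * ∑ x ∈ graphCl G S, ∑ y ∈ G.neighborFinset x ∩ graphCl G S, (u y - u x) ^ 2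

/-- The functional `J_n(u) = (1/2) D(u) − (λ_n/2) Σ_{x∈S} u(x)² d_x`. -/
noncomputable def morseJ {V : Type*} [DecidableEq V] (G : SimpleGraph V)
    [DecidableRel G.Adj] [∀ v : V, Fintype (G.neighborSet v)]
    (S : Finset V) (lam : ℕ → ℝ) (n : ℕ) (u : V → ℝ) : ℝ :=
  (1 / 2 : ℝ) * graphDirichlet G S u - (lam n / 2) * ∑ x ∈ S, u x ^ 2 * (G.degree x : ℝ)

/-- **Energy estimate for the discrete Morse flow.** Let `S` be finite with all degrees
on `S̄ = S ∪ δS` at least `1`, `h > 0`, and `λ₁ ≤ ⋯ ≤ λ_N`. If `u₀` vanishes on `δS`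
and, for `n = 1, …, N`, `u_n` minimizes
`F_n(u) = (1/(2h)) Σ_S (u − u_{n−1})² d + J_n(u)` over functions vanishing on `δS`,
then
`(1/2) Σ_{n=1}^N h Σ_{x∈S} ((u_n x − u_{n−1} x)/h)² d_x + J_N(u_N) ≤ J₁(u₀)`. -/
theorem discrete_morse_flow_energy_estimate {V : Type*} [DecidableEq V]
    (G : SimpleGraph V) [DecidableRel G.Adj] [∀ v : V, Fintype (G.neighborSet v)]
    (S : Finset V) (hdeg : ∀ x ∈ graphCl G S, 1 ≤ G.degree x)
    (h : ℝ) (hh : 0 < h) (N : ℕ) (hN : 1 ≤ N)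
    (lam : ℕ → ℝ) (hlam : ∀ n, 1 ≤ n → n < N → lam n ≤ lam (n + 1))
    (u : ℕ → V → ℝ)
    (hu0 : ∀ y ∈ graphBd G S, u 0 y = 0)
    (hmin : ∀ n, 1 ≤ n → n ≤ N →
      (∀ y ∈ graphBd G S, u n y = 0) ∧
      ∀ w : V → ℝ, (∀ y ∈ graphBd G S, w y = 0) →
        (1 / (2 * h)) * ∑ x ∈ S, (u n x - u (n - 1) x) ^ 2 * (G.degree x : ℝ)
            + morseJ G S lam n (u n) ≤
          (1 / (2 * h)) * ∑ x ∈ S, (w x - u (n - 1) x) ^ 2 * (G.degree x : ℝ)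
            + morseJ G S lam n w) :
    (1 / 2 : ℝ) * ∑ n ∈ Finset.Icc 1 N,
        h * ∑ x ∈ S, ((u n x - u (n - 1) x) / h) ^ 2 * (G.degree x : ℝ)
      + morseJ G S lam N (u N) ≤ morseJ G S lam 1 (u 0) := by

  have nonneg : ∀ v : V → ℝ, 0 ≤ ∑ x ∈ S, v x ^ 2 * (G.degree x : ℝ) := by
    intro v
    refine Finset.sum_nonneg fun x _ => ?_
    positivity
  have key : ∀ n, 1 ≤ n → n ≤ N →
      (1 / (2 * h)) * ∑ x ∈ S, (u n x - u (n - 1) x) ^ 2 * (G.degree x : ℝ)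
        + morseJ G S lam n (u n) ≤ morseJ G S lam n (u (n - 1)) := by
    intro n h1 h2
    obtain ⟨hz, hmin'⟩ := hmin n h1 h2
    have hw : ∀ y ∈ graphBd G S, u (n - 1) y = 0 := by
      rcases Nat.lt_or_ge n 2 with hn | hn
      · have : n = 1 := by omega
        simpa [this] using hu0
      · exact (hmin (n - 1) (by omega) (by omega)).1
    have := hmin' (u (n - 1)) hw
    simpa [sub_self] using this
  have mono : ∀ n v, 1 ≤ n → n < N → morseJ G S lam (n + 1) v ≤ morseJ G S lam n v := by
    intro n v h1 h2
    have hl := hlam n h1 h2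
    have hv := nonneg v
    unfold morseJ
    nlinarith
  have hconv : ∀ n : ℕ,
      (1 / 2 : ℝ) * (h * ∑ x ∈ S, ((u n x - u (n - 1) x) / h) ^ 2 * (G.degree x : ℝ))
        = (1 / (2 * h)) * ∑ x ∈ S, (u n x - u (n - 1) x) ^ 2 * (G.degree x : ℝ) := by
    intro n
    rw [Finset.mul_sum, Finset.mul_sum, Finset.mul_sum]
    refine Finset.sum_congr rfl fun x _ => ?_
    field_simp
  have main : ∀ M, 1 ≤ M → M ≤ N →
      (1 / 2 : ℝ) * ∑ n ∈ Finset.Icc 1 M,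
          h * ∑ x ∈ S, ((u n x - u (n - 1) x) / h) ^ 2 * (G.degree x : ℝ)
        + morseJ G S lam M (u M) ≤ morseJ G S lam 1 (u 0) := by
    intro M
    induction M with
    | zero => intro h1; omega
    | succ m ih =>
      intro _ hMN
      rcases Nat.eq_zero_or_pos m with h0 | hm
      · subst h0
        simp only [Finset.Icc_self, Finset.sum_singleton]
        rw [hconv 1]
        simpa using key 1 le_rfl hN
      · have ihm := ih hm (by omega)
        rw [Finset.sum_Icc_succ_top (by omega : 1 ≤ m + 1), mul_add, hconv (m + 1)]
        have hk := key (m + 1) (by omega) hMN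
        have hmo := mono m (u m) hm (by omega)
        simp only [Nat.add_sub_cancel] at hk ⊢
        linarith
  exact main N hN le_rfl
end

section
/- Let G = (V,E) be a locally finite simple graph, S ⊆ V finite with every vertex of S̄ = S ∪ δS of degree at least 1, T > 0, and let Vpot : [0,T] × S̄ → ℝ be a potential which is continuous in t for each fixed vertex. Let φ : S̄ → ℝ vanish on δS. Then there exists a function u : [0,T] × S̄ → ℝ such that u(t,y) = 0 for all t ∈ [0,T] and y ∈ δS, u(0,x) = φ(x) for all x ∈ S̄, t ↦ u(t,x) is differentiable for each x ∈ S, and ∂_t u(t,x) = Δu(t,x) + Vpot(t,x) u(t,x) for all t ∈ [0,T] and x ∈ S (existence of a global solution of the heat flow with time-variable potential and Dirichlet boundary condition). -/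
section HeatAux
open Set


theorem localODE {E : Type*} [NormedAddCommGroup E] [NormedSpace ℝ E] [CompleteSpace E]
    (F : ℝ → E → E) (L : NNReal) (a b : ℝ) (hab : a ≤ b)
    (hstep : b - a ≤ 1 / (2 * ((L : ℝ) + 1)))
    (hLip : ∀ t ∈ Set.Icc a b, LipschitzWith L (F t))
    (hF0 : ∀ t ∈ Set.Icc a b, F t 0 = 0)
    (hcont : ∀ x : E, ContinuousOn (fun t => F t x) (Set.Icc a b))
    (x₀ : E) :
    ∃ f : ℝ → E, f a = x₀ ∧ ∀ t ∈ Set.Icc a b,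
      HasDerivWithinAt f (F t (f t)) (Set.Icc a b) t := by
  have hL : (0:ℝ) ≤ L := L.coe_nonneg
  have hc : (0:ℝ) ≤ ‖x₀‖ := norm_nonneg _
  have hpl : IsPicardLindelof F (tmin := a) (tmax := b) ⟨a, ⟨le_rfl, hab⟩⟩ x₀
      ⟨‖x₀‖ + 1, by positivity⟩ 0 ⟨(L : ℝ) * (2 * ‖x₀‖ + 1), by positivity⟩ L := by
    refine ⟨fun t ht => (hLip t ht).lipschitzOnWith,
      fun x _ => hcont x, fun t ht x hx => ?_, ?_⟩
    · have h1 : ‖F t x‖ ≤ (L : ℝ) * ‖x‖ := by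
        have := (hLip t ht).dist_le_mul x 0
        simpa [hF0 t ht, dist_eq_norm] using this
      have h2 : ‖x‖ ≤ 2 * ‖x₀‖ + 1 := by
        have hx' : ‖x - x₀‖ ≤ ‖x₀‖ + 1 := by
          simpa [dist_eq_norm] using Metric.mem_closedBall.mp (show x ∈ Metric.closedBall x₀ (‖x₀‖ + 1) from hx)
        have h3 := norm_sub_norm_le x x₀
        linarith
      calc ‖F t x‖ ≤ (L : ℝ) * ‖x‖ := h1
        _ ≤ (L : ℝ) * (2 * ‖x₀‖ + 1) := by nlinarith
    · have hmax : max (b - a) (a - a) = b - a := by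
        simp [max_eq_left, sub_nonneg.mpr hab]
      simp only [NNReal.coe_mk, NNReal.coe_zero, sub_zero]
      rw [hmax]
      have h2L : (0:ℝ) < 2 * ((L:ℝ) + 1) := by positivity
      have h1 : (b - a) * (2 * ((L:ℝ) + 1)) ≤ 1 := by
        rw [← le_div_iff₀ h2L] at *; exact hstep
      change (L:ℝ) * (2 * ‖x₀‖ + 1) * (b - a) ≤ ‖x₀‖ + 1
      nlinarith [mul_nonneg hL hc, sub_nonneg.mpr hab, mul_nonneg (sub_nonneg.mpr hab) (mul_nonneg hL hc)]
  exact hpl.exists_eq_forall_mem_Icc_hasDerivWithinAt₀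

theorem globalODE {E : Type*} [NormedAddCommGroup E] [NormedSpace ℝ E] [CompleteSpace E]
    (F : ℝ → E → E) (L : NNReal) (T : ℝ) (hT : 0 ≤ T)
    (hLip : ∀ t ∈ Set.Icc 0 T, LipschitzWith L (F t))
    (hF0 : ∀ t ∈ Set.Icc 0 T, F t 0 = 0)
    (hcont : ∀ x : E, ContinuousOn (fun t => F t x) (Set.Icc 0 T))
    (x₀ : E) :
    ∃ f : ℝ → E, f 0 = x₀ ∧ ∀ t ∈ Set.Icc 0 T,
      HasDerivWithinAt f (F t (f t)) (Set.Icc 0 T) t := by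
  set δ : ℝ := 1 / (2 * ((L : ℝ) + 1)) with hδdef
  have hδ : 0 < δ := by positivity
  have key : ∀ n : ℕ, ∀ (a b : ℝ) (y₀ : E), 0 ≤ a → a ≤ b → b ≤ T → b - a ≤ n * δ →
      ∃ f : ℝ → E, f a = y₀ ∧ ∀ t ∈ Set.Icc a b,
        HasDerivWithinAt f (F t (f t)) (Set.Icc a b) t := by
    intro n
    induction n with
    | zero =>
      intro a b y₀ ha hab hbT hlen
      refine localODE F L a b hab (by push_cast at hlen; linarith) ?_ ?_ ?_ y₀
      · exact fun t ht => hLip t ⟨ha.trans ht.1, ht.2.trans hbT⟩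
      · exact fun t ht => hF0 t ⟨ha.trans ht.1, ht.2.trans hbT⟩
      · exact fun x => (hcont x).mono (Icc_subset_Icc ha hbT)
    | succ n ih =>
      intro a b y₀ ha hab hbT hlen
      by_cases hsmall : b - a ≤ δ
      · refine localODE F L a b hab hsmall ?_ ?_ ?_ y₀
        · exact fun t ht => hLip t ⟨ha.trans ht.1, ht.2.trans hbT⟩
        · exact fun t ht => hF0 t ⟨ha.trans ht.1, ht.2.trans hbT⟩
        · exact fun x => (hcont x).mono (Icc_subset_Icc ha hbT)
      · push_neg at hsmall
        set c := b - δ with hcdef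
        have hac : a ≤ c := by simp only [hcdef]; linarith
        have hcb : c ≤ b := by simp only [hcdef]; linarith
        have hc0 : 0 ≤ c := ha.trans hac
        have hcT : c ≤ T := hcb.trans hbT
        obtain ⟨f, hf0, hfd⟩ := ih a c y₀ ha hac hcT (by push_cast at hlen ⊢; simp only [hcdef]; linarith)
        obtain ⟨g, hg0, hgd⟩ := localODE F L c b hcb (by simp only [hcdef]; linarith)
          (fun t ht => hLip t ⟨hc0.trans ht.1, ht.2.trans hbT⟩)
          (fun t ht => hF0 t ⟨hc0.trans ht.1, ht.2.trans hbT⟩)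
          (fun x => (hcont x).mono (Icc_subset_Icc hc0 hbT)) (f c)
        set h : ℝ → E := fun t => if t ≤ c then f t else g t with hhdef
        have hhf : ∀ s ∈ Icc a c, h s = f s := fun s hs => if_pos hs.2
        have hhg : ∀ s ∈ Icc c b, h s = g s := by
          intro s hs
          by_cases hsc : s ≤ c
          · have : s = c := le_antisymm hsc hs.1
            simp [hhdef, this, hg0]
          · exact if_neg hsc
        have hIccU : Icc a c ∪ Icc c b = Icc a b := Icc_union_Icc_eq_Icc hac hcb
        have H1 : ∀ t ∈ Icc a c, HasDerivWithinAt h (F t (h t)) (Icc a c) t := by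
          intro t ht
          have := (hfd t ht).congr hhf (hhf t ht)
          rwa [hhf t ht]
        have H2 : ∀ t ∈ Icc c b, HasDerivWithinAt h (F t (h t)) (Icc c b) t := by
          intro t ht
          have := (hgd t ht).congr hhg (hhg t ht)
          rwa [hhg t ht]
        refine ⟨h, by rw [hhf a ⟨le_rfl, hac⟩, hf0], fun t ht => ?_⟩
        rcases lt_trichotomy t c with htc | htc | htc
        · refine (H1 t ⟨ht.1, htc.le⟩).mono_of_mem_nhdsWithin ?_
          have hset : Icc a c = Icc a b ∩ Iic c := by
            ext s; simp only [mem_Icc, mem_inter_iff, mem_Iic]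
            constructor
            · rintro ⟨h1, h2⟩; exact ⟨⟨h1, h2.trans hcb⟩, h2⟩
            · rintro ⟨⟨h1, _⟩, h2⟩; exact ⟨h1, h2⟩
          rw [hset]
          exact Filter.inter_mem self_mem_nhdsWithin
            (mem_nhdsWithin_of_mem_nhds (Iic_mem_nhds htc))
        · rw [htc] at ht ⊢
          have := (H1 c ⟨ht.1, le_rfl⟩).union (H2 c ⟨le_rfl, ht.2⟩)
          rwa [hIccU] at this
        · refine (H2 t ⟨htc.le, ht.2⟩).mono_of_mem_nhdsWithin ?_
          have hset : Icc c b = Icc a b ∩ Ici c := by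
            ext s; simp only [mem_Icc, mem_inter_iff, mem_Ici]
            constructor <;> intro hs
            · exact ⟨⟨hac.trans hs.1, hs.2⟩, hs.1⟩
            · exact ⟨hs.2, hs.1.2⟩
          rw [hset]
          exact Filter.inter_mem self_mem_nhdsWithin
            (mem_nhdsWithin_of_mem_nhds (Ici_mem_nhds htc))
  obtain ⟨f, hf0, hfd⟩ := key ⌈T / δ⌉₊ 0 T x₀ le_rfl hT le_rfl (by
    have := Nat.le_ceil (T / δ)
    rw [div_le_iff₀ hδ] at this
    linarith)
  exact ⟨f, hf0, hfd⟩

/-- Extension by zero of a function on `S` to all of `V`. -/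
noncomputable def extS {V : Type*} [DecidableEq V] (S : Finset V)
    (v : {x // x ∈ S} → ℝ) (y : V) : ℝ :=
  if h : y ∈ S then v ⟨y, h⟩ else 0

/-- The vector field of the heat ODE on `S`. -/
noncomputable def heatF {V : Type*} [DecidableEq V] (G : SimpleGraph V) [DecidableRel G.Adj]
    [∀ v : V, Fintype (G.neighborSet v)] (S : Finset V) (Vpot : ℝ → V → ℝ)
    (t : ℝ) (v : {x // x ∈ S} → ℝ) (i : {x // x ∈ S}) : ℝ :=
  graphLap G (extS S v) ↑i + Vpot t ↑i * v i


end HeatAux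

/-- **Global existence for the heat flow with a time-variable potential and Dirichlet
boundary condition.** Let `S ⊆ V` be finite with all degrees on `S̄ = S ∪ δS` at least
`1`, `T > 0`, `Vpot : [0,T] × S̄ → ℝ` continuous in `t` for each fixed vertex, and
`φ : S̄ → ℝ` vanishing on `δS`. Then there exists `u : [0,T] × S̄ → ℝ` with `u = 0` on
`δS`, `u(0,·) = φ`, `t ↦ u(t,x)` differentiable for each `x ∈ S`, and
`∂_t u(t,x) = Δu(t,x) + Vpot(t,x) u(t,x)` on `[0,T] × S`. -/

theorem heat_flow_time_variable_potential_exists {V : Type*} [DecidableEq V]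
    (G : SimpleGraph V) [DecidableRel G.Adj] [∀ v : V, Fintype (G.neighborSet v)]
    (S : Finset V) (hdeg : ∀ x ∈ graphCl G S, 1 ≤ G.degree x)
    (T : ℝ) (hT : 0 < T) (Vpot : ℝ → V → ℝ)
    (hVcont : ∀ x ∈ graphCl G S, ContinuousOn (fun t => Vpot t x) (Set.Icc 0 T))
    (φ : V → ℝ) (hφ : ∀ y ∈ graphBd G S, φ y = 0) :
    ∃ u : ℝ → V → ℝ,
      (∀ t ∈ Set.Icc (0 : ℝ) T, ∀ y ∈ graphBd G S, u t y = 0) ∧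
      (∀ x ∈ graphCl G S, u 0 x = φ x) ∧
      (∀ x ∈ S, ∀ t ∈ Set.Icc (0 : ℝ) T,
        HasDerivWithinAt (fun s => u s x) (graphLap G (u t) x + Vpot t x * u t x)
          (Set.Icc 0 T) t) := by
  classical
  have hScl : ∀ x ∈ S, x ∈ graphCl G S := fun x hx => Finset.mem_union_left _ hx
  -- a uniform bound on the potential
  obtain ⟨M₀, hM₀⟩ := IsCompact.exists_bound_of_continuousOn isCompact_Icc
    (f := fun t => ∑ x ∈ S, |Vpot t x|)
    (by exact continuousOn_finset_sum S fun x hx => (hVcont x (hScl x hx)).abs)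
  set M : ℝ := max M₀ 0 with hMdef
  have hM0 : 0 ≤ M := le_max_right _ _
  have hM : ∀ t ∈ Set.Icc (0:ℝ) T, ∀ x ∈ S, |Vpot t x| ≤ M := by
    intro t ht x hx
    have h1 : |Vpot t x| ≤ ∑ y ∈ S, |Vpot t y| :=
      Finset.single_le_sum (f := fun y => |Vpot t y|) (fun y _ => abs_nonneg _) hx
    have h2 := hM₀ t ht
    have h3 : ∑ y ∈ S, |Vpot t y| ≤ ‖∑ y ∈ S, |Vpot t y|‖ := le_abs_self _
    have h4 : M₀ ≤ M := le_max_left _ _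
    linarith
  set L : NNReal := ⟨2 + M, by linarith⟩ with hLdef
  have hLcoe : (L : ℝ) = 2 + M := rfl
  set F : ℝ → ({x // x ∈ S} → ℝ) → ({x // x ∈ S} → ℝ) := heatF G S Vpot with hFdef
  -- per-coordinate bound for the extension
  have hext : ∀ v w : {x // x ∈ S} → ℝ, ∀ y : V,
      |extS S v y - extS S w y| ≤ dist v w := by
    intro v w y
    by_cases hy : y ∈ S
    · simp only [extS, dif_pos hy]
      rw [← Real.dist_eq]
      exact dist_le_pi_dist v w ⟨y, hy⟩
    · simp [extS, dif_neg hy, dist_nonneg]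
  have hLip : ∀ t ∈ Set.Icc (0:ℝ) T, LipschitzWith L (F t) := by
    intro t ht
    apply LipschitzWith.of_dist_le_mul
    intro v w
    have hLd : (0:ℝ) ≤ (L:ℝ) * dist v w := mul_nonneg L.coe_nonneg dist_nonneg
    rw [dist_pi_le_iff hLd]
    rintro ⟨x, hx⟩
    rw [Real.dist_eq]
    have hd : 1 ≤ G.degree x := hdeg x (hScl x hx)
    have hd0 : (0:ℝ) < G.degree x := by exact_mod_cast Nat.lt_of_lt_of_le Nat.zero_lt_one hd
    have e1 : F t v ⟨x, hx⟩ - F t w ⟨x, hx⟩ =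
        (graphLap G (extS S v) x - graphLap G (extS S w) x)
          + Vpot t x * (v ⟨x, hx⟩ - w ⟨x, hx⟩) := by
      simp only [hFdef, heatF]; ring
    have e2 : graphLap G (extS S v) x - graphLap G (extS S w) x =
        (1 / (G.degree x : ℝ)) *
          ∑ y ∈ G.neighborFinset x, ((extS S v y - extS S w y) - (extS S v x - extS S w x)) := by
      simp only [graphLap]
      rw [← mul_sub, ← Finset.sum_sub_distrib]
      congr 1
      exact Finset.sum_congr rfl fun y _ => by ring
    have hb : |∑ y ∈ G.neighborFinset x,
        ((extS S v y - extS S w y) - (extS S v x - extS S w x))|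
        ≤ (G.degree x : ℝ) * (2 * dist v w) := by
      calc |∑ y ∈ G.neighborFinset x, ((extS S v y - extS S w y) - (extS S v x - extS S w x))|
          ≤ ∑ y ∈ G.neighborFinset x,
              |(extS S v y - extS S w y) - (extS S v x - extS S w x)| :=
            Finset.abs_sum_le_sum_abs _ _
        _ ≤ ∑ _y ∈ G.neighborFinset x, 2 * dist v w := by
            refine Finset.sum_le_sum fun y _ => ?_
            have h1 := hext v w y
            have h2 := hext v w x
            calc |(extS S v y - extS S w y) - (extS S v x - extS S w x)|
                ≤ |extS S v y - extS S w y| + |extS S v x - extS S w x| := abs_sub _ _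
              _ ≤ 2 * dist v w := by linarith
        _ = (G.degree x : ℝ) * (2 * dist v w) := by
            rw [Finset.sum_const, SimpleGraph.card_neighborFinset_eq_degree, nsmul_eq_mul]
    have ht1 : |graphLap G (extS S v) x - graphLap G (extS S w) x| ≤ 2 * dist v w := by
      rw [e2, abs_mul, abs_of_pos (by positivity : (0:ℝ) < 1 / (G.degree x : ℝ))]
      calc (1 / (G.degree x : ℝ)) * |∑ y ∈ G.neighborFinset x,
            ((extS S v y - extS S w y) - (extS S v x - extS S w x))|
          ≤ (1 / (G.degree x : ℝ)) * ((G.degree x : ℝ) * (2 * dist v w)) := by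
            exact mul_le_mul_of_nonneg_left hb (by positivity)
        _ = 2 * dist v w := by field_simp
    have ht2 : |Vpot t x * (v ⟨x, hx⟩ - w ⟨x, hx⟩)| ≤ M * dist v w := by
      rw [abs_mul]
      have h1 : |v ⟨x, hx⟩ - w ⟨x, hx⟩| ≤ dist v w := by
        rw [← Real.dist_eq]; exact dist_le_pi_dist v w ⟨x, hx⟩
      exact mul_le_mul (hM t ht x hx) h1 (abs_nonneg _) hM0
    calc |F t v ⟨x, hx⟩ - F t w ⟨x, hx⟩|
        ≤ |graphLap G (extS S v) x - graphLap G (extS S w) x|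
          + |Vpot t x * (v ⟨x, hx⟩ - w ⟨x, hx⟩)| := by rw [e1]; exact abs_add_le _ _
      _ ≤ 2 * dist v w + M * dist v w := add_le_add ht1 ht2
      _ = (L : ℝ) * dist v w := by rw [hLcoe]; ring
  have hF0 : ∀ t ∈ Set.Icc (0:ℝ) T, F t 0 = 0 := by
    intro t _
    funext i
    have hz : extS S (0 : {x // x ∈ S} → ℝ) = fun _ => 0 := by
      funext y; by_cases hy : y ∈ S <;> simp [extS, hy]
    simp [hFdef, heatF, hz, graphLap]
  have hcont : ∀ v, ContinuousOn (fun t => F t v) (Set.Icc (0:ℝ) T) := by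
    intro v
    rw [continuousOn_pi]
    intro i
    exact continuousOn_const.add ((hVcont ↑i (hScl ↑i i.2)).mul continuousOn_const)
  obtain ⟨f, hf0, hfd⟩ := globalODE F L T hT.le hLip hF0 hcont (fun i => φ ↑i)
  refine ⟨fun t => extS S (f t), ?_, ?_, ?_⟩
  · intro t _ y hy
    have hyS : y ∉ S := (Finset.mem_sdiff.mp hy).2
    simp [extS, hyS]
  · intro x hx
    by_cases hxS : x ∈ S
    · simp [extS, hxS, hf0]
    · have hxB : x ∈ graphBd G S := by
        rcases Finset.mem_union.mp hx with h | h
        · exact absurd h hxS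
        · exact h
      simp [extS, hxS, hφ x hxB]
  · intro x hx t ht
    have hd := hfd t ht
    have hcomp := (ContinuousLinearMap.proj (R := ℝ)
      (φ := fun _ : {x // x ∈ S} => ℝ) ⟨x, hx⟩).hasFDerivAt.comp_hasDerivWithinAt t hd
    have hfun : (fun s => extS S (f s) x) = fun s => (f s) ⟨x, hx⟩ := by
      funext s; simp [extS, hx]
    have hval : graphLap G (extS S (f t)) x + Vpot t x * extS S (f t) x
        = F t (f t) ⟨x, hx⟩ := by
      simp [hFdef, heatF, extS, hx]
    simp only [hfun, hval]
    exact hcomp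
end
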